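/- Suppose F: [0,T] → ℝ^n is differentiable with nonnegative entries, and |d/dt F_i(t)| ≤ J Σ_j (A_{ij} + d_G δ_{ij}) F_j(t) for a nonnegative symmetric matrix A with row sums at most d_G and a constant J ≥ 0. Then F_i(t) ≤ e^{J d_G t} Σ_j [e^{J A t}]_{ij} F_j(0) for all t ∈ [0,T]. -/

import Mathlib

open Finset

lemma aux_pow_entry_nonneg {n : ℕ} (B : Matrix (Fin n) (Fin n) ℝ) (hB : ∀ i j, 0 ≤ B i j) :
    ∀ k i j, 0 ≤ (B ^ k) i j := by
  intro k
  induction k with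
  | zero => intro i j; simp [Matrix.one_apply]; positivity
  | succ k ih =>
    intro i j
    rw [pow_succ, Matrix.mul_apply]
    exact Finset.sum_nonneg fun m _ => mul_nonneg (ih i m) (hB m j)

lemma aux_exp_entry_nonneg {n : ℕ} (B : Matrix (Fin n) (Fin n) ℝ) (hB : ∀ i j, 0 ≤ B i j)
    (i j : Fin n) : 0 ≤ NormedSpace.exp B i j := by
  letI : SeminormedRing (Matrix (Fin n) (Fin n) ℝ) := Matrix.linftyOpSemiNormedRing
  letI : NormedRing (Matrix (Fin n) (Fin n) ℝ) := Matrix.linftyOpNormedRing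
  letI : NormedAlgebra ℝ (Matrix (Fin n) (Fin n) ℝ) := Matrix.linftyOpNormedAlgebra
  let el : Matrix (Fin n) (Fin n) ℝ →L[ℝ] ℝ :=
    LinearMap.toContinuousLinearMap
      { toFun := fun m => m i j, map_add' := fun _ _ => rfl, map_smul' := fun _ _ => rfl }
  have hsum : Summable (fun k : ℕ => ((Nat.factorial k : ℝ))⁻¹ • B ^ k) :=
    NormedSpace.expSeries_summable' (𝕂 := ℝ) B
  have : NormedSpace.exp B i j = el (NormedSpace.exp B) := rfl
  rw [this, NormedSpace.exp_eq_tsum ℝ, el.map_tsum hsum]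
  refine tsum_nonneg fun k => ?_
  show 0 ≤ el (((Nat.factorial k : ℝ))⁻¹ • B ^ k)
  rw [map_smul]
  exact smul_nonneg (by positivity) (aux_pow_entry_nonneg B hB k i j)

/-- Grönwall-type entrywise comparison. Suppose `F : [0,T] → ℝ^n` is
differentiable (with derivative `F'`) with nonnegative entries, and
`|d/dt F_i(t)| ≤ J Σ_j (A_{ij} + d_G δ_{ij}) F_j(t)` for a nonnegative symmetric matrix `A`
whose row sums are at most `d_G`, and a constant `J ≥ 0`. Then
`F_i(t) ≤ e^{J d_G t} Σ_j [e^{J A t}]_{ij} F_j(0)` for all `t ∈ [0,T]`. -/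
theorem gronwall_matrix_comparison {n : ℕ}
    (T J dG : ℝ) (hT : 0 ≤ T) (hJ : 0 ≤ J) (hdG : 0 ≤ dG)
    (A : Matrix (Fin n) (Fin n) ℝ)
    (hAsymm : A.IsSymm) (hApos : ∀ i j, 0 ≤ A i j)
    (hArow : ∀ i, ∑ j, A i j ≤ dG)
    (F F' : ℝ → Fin n → ℝ)
    (hFpos : ∀ t ∈ Set.Icc (0 : ℝ) T, ∀ i, 0 ≤ F t i)
    (hderiv : ∀ i, ∀ t ∈ Set.Icc (0 : ℝ) T, HasDerivAt (fun τ => F τ i) (F' t i) t)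
    (hbound : ∀ t ∈ Set.Icc (0 : ℝ) T, ∀ i,
      |F' t i| ≤ J * ∑ j, (A i j + if i = j then dG else 0) * F t j) :
    ∀ t ∈ Set.Icc (0 : ℝ) T, ∀ i,
      F t i ≤ Real.exp (J * dG * t) * ∑ j, (NormedSpace.exp ((J * t) • A)) i j * F 0 j := by
  intro t ht i
  letI : SeminormedRing (Matrix (Fin n) (Fin n) ℝ) := Matrix.linftyOpSemiNormedRing
  letI : NormedRing (Matrix (Fin n) (Fin n) ℝ) := Matrix.linftyOpNormedRing
  letI : NormedAlgebra ℝ (Matrix (Fin n) (Fin n) ℝ) := Matrix.linftyOpNormedAlgebra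
  have hsub : Set.Icc (0:ℝ) t ⊆ Set.Icc 0 T := Set.Icc_subset_Icc le_rfl ht.2
  set E : ℝ → Matrix (Fin n) (Fin n) ℝ := fun s => NormedSpace.exp ((J * (t - s)) • A)
    with hEdef
  -- entries of E are nonnegative for s ≤ t
  have hEnn : ∀ s, s ≤ t → ∀ k l, 0 ≤ E s k l := by
    intro s hs k l
    refine aux_exp_entry_nonneg _ (fun k' l' => ?_) k l
    have : ((J * (t - s)) • A) k' l' = (J * (t - s)) * A k' l' := rfl
    rw [this]
    exact mul_nonneg (mul_nonneg hJ (sub_nonneg.2 hs)) (hApos k' l')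
  set w : ℝ → ℝ := fun s => Real.exp (J * dG * (t - s)) * ∑ j, E s i j * F s j with hwdef
  -- derivative of w
  have hw : ∀ s ∈ Set.Icc (0:ℝ) T, HasDerivAt w
      ((Real.exp (J * dG * (t - s)) * (J * dG * (-1))) * (∑ j, E s i j * F s j)
        + Real.exp (J * dG * (t - s))
          * (∑ j, (((J * (-1)) • (A * E s)) i j * F s j + E s i j * F' s j))) s := by
    intro s hs
    have hinner : HasDerivAt (fun s : ℝ => J * dG * (t - s)) (J * dG * (-1)) s :=
      ((hasDerivAt_id s).const_sub t).const_mul (J * dG)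
    have hexp : HasDerivAt (fun s : ℝ => Real.exp (J * dG * (t - s)))
        (Real.exp (J * dG * (t - s)) * (J * dG * (-1))) s :=
      by have := (Real.hasDerivAt_exp (J * dG * (t - s))).comp s hinner; exact this
    have hφ : HasDerivAt (fun s : ℝ => J * (t - s)) (J * (-1)) s :=
      ((hasDerivAt_id s).const_sub t).const_mul J
    have hE : HasDerivAt E ((J * (-1)) • (A * E s)) s :=
      by have := (hasDerivAt_exp_smul_const' (𝕂 := ℝ) A (J * (t - s))).scomp s hφ; exact this
    have hEij : ∀ j : Fin n, HasDerivAt (fun s : ℝ => E s i j)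
        (((J * (-1)) • (A * E s)) i j) s := fun j =>
      ((LinearMap.toContinuousLinearMap
        ({ toFun := fun m => m i j, map_add' := fun _ _ => rfl, map_smul' := fun _ _ => rfl } :
          Matrix (Fin n) (Fin n) ℝ →ₗ[ℝ] ℝ)).hasFDerivAt.comp_hasDerivAt s hE)
    have hsum : HasDerivAt (fun s : ℝ => ∑ j, E s i j * F s j)
        (∑ j, (((J * (-1)) • (A * E s)) i j * F s j + E s i j * F' s j)) s :=
      HasDerivAt.fun_sum fun j _ => (hEij j).mul (hderiv j s hs)
    exact hexp.mul hsum
  -- the derivative is nonpositive on [0, t]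
  have hD : ∀ s ∈ Set.Icc (0:ℝ) t,
      (Real.exp (J * dG * (t - s)) * (J * dG * (-1))) * (∑ j, E s i j * F s j)
        + Real.exp (J * dG * (t - s))
          * (∑ j, (((J * (-1)) • (A * E s)) i j * F s j + E s i j * F' s j)) ≤ 0 := by
    intro s hs
    have hsT := hsub hs
    have hFp : ∀ k, 0 ≤ F s k := hFpos s hsT
    have hEs := hEnn s hs.2
    -- commute and reindex
    have hcomm : A * E s = E s * A :=
      (((Commute.refl A).smul_right (J * (t - s))).exp_right).eq
    have key : ∑ j, (A * E s) i j * F s j = ∑ k, E s i k * ∑ j, A k j * F s j := by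
      rw [hcomm]
      simp_rw [Matrix.mul_apply, Finset.sum_mul, mul_assoc]
      rw [Finset.sum_comm]
      simp_rw [← Finset.mul_sum]
    have hrow : ∀ k, F' s k ≤ J * (∑ j, A k j * F s j) + J * dG * F s k := by
      intro k
      have h1 := hbound s hsT k
      have h2 : ∑ j, (A k j + if k = j then dG else 0) * F s j
          = (∑ j, A k j * F s j) + dG * F s k := by
        simp_rw [add_mul, Finset.sum_add_distrib]
        congr 1
        simp [ite_mul, Finset.sum_ite_eq]
      calc F' s k ≤ |F' s k| := le_abs_self _
        _ ≤ J * ∑ j, (A k j + if k = j then dG else 0) * F s j := h1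
        _ = J * (∑ j, A k j * F s j) + J * dG * F s k := by rw [h2]; ring
    set Sf := ∑ k, E s i k * F s k with hSf
    set Sa := ∑ k, E s i k * ∑ j, A k j * F s j with hSa
    set Sd := ∑ k, E s i k * F' s k with hSd
    have hsplit : ∑ j, (((J * (-1)) • (A * E s)) i j * F s j + E s i j * F' s j)
        = -(J * Sa) + Sd := by
      rw [Finset.sum_add_distrib]
      congr 1
      have : ∀ j, ((J * (-1)) • (A * E s)) i j * F s j
          = (J * (-1)) * ((A * E s) i j * F s j) := fun j => by
        have : ((J * (-1)) • (A * E s)) i j = (J * (-1)) * (A * E s) i j := rfl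
        rw [this]; ring
      rw [Finset.sum_congr rfl fun j _ => this j, ← Finset.mul_sum, key]
      ring
    have hSdle : Sd ≤ J * Sa + J * dG * Sf := by
      have h3 : Sd ≤ ∑ k, E s i k * (J * (∑ j, A k j * F s j) + J * dG * F s k) :=
        Finset.sum_le_sum fun k _ => mul_le_mul_of_nonneg_left (hrow k) (hEs i k)
      have h4 : ∑ k, E s i k * (J * (∑ j, A k j * F s j) + J * dG * F s k)
          = J * Sa + J * dG * Sf := by
        have : ∀ k, E s i k * (J * (∑ j, A k j * F s j) + J * dG * F s k)
            = J * (E s i k * ∑ j, A k j * F s j) + J * dG * (E s i k * F s k) := fun k => by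
          ring
        rw [Finset.sum_congr rfl fun k _ => this k, Finset.sum_add_distrib,
          ← Finset.mul_sum, ← Finset.mul_sum]
      linarith
    rw [hsplit]
    have hSfnn : 0 ≤ Sf := Finset.sum_nonneg fun k _ => mul_nonneg (hEs i k) (hFp k)
    have hexp_pos : (0:ℝ) < Real.exp (J * dG * (t - s)) := Real.exp_pos _
    nlinarith [mul_le_mul_of_nonneg_left (show -(J * Sa) + Sd ≤ J * dG * Sf by linarith)
      hexp_pos.le]
  -- antitone
  have hanti : AntitoneOn w (Set.Icc (0:ℝ) t) := by
    refine antitoneOn_of_deriv_nonpos (convex_Icc 0 t) ?_ ?_ ?_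
    · exact fun s hs => ((hw s (hsub hs)).continuousAt).continuousWithinAt
    · rw [interior_Icc]
      exact fun s hs => ((hw s (hsub (Set.Ioo_subset_Icc_self hs))).differentiableAt)
        |>.differentiableWithinAt
    · rw [interior_Icc]
      intro s hs
      have hs' : s ∈ Set.Icc (0:ℝ) t := Set.Ioo_subset_Icc_self hs
      rw [(hw s (hsub hs')).deriv]
      exact hD s hs'
  have hwt : w t ≤ w 0 := hanti ⟨le_rfl, ht.1⟩ ⟨ht.1, le_rfl⟩ ht.1
  have hwt_eq : w t = F t i := by
    have : E t = 1 := by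
      rw [hEdef]
      simp [sub_self]
    rw [hwdef]
    simp only [this, sub_self, mul_zero, Real.exp_zero, one_mul, Matrix.one_apply]
    simp [ite_mul, Finset.sum_ite_eq]
  have hw0_eq : w 0 = Real.exp (J * dG * t)
      * ∑ j, (NormedSpace.exp ((J * t) • A)) i j * F 0 j := by
    rw [hwdef, hEdef]
    simp [sub_zero]
  rw [← hwt_eq] at *
  calc w t ≤ w 0 := hwt
    _ = _ := hw0_eq
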